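/- Let G1 and G2 be graphs on n1 ≥ 1 and n2 ≥ 1 vertices, respectively, and let G = G1 ∧ G2 be their join. Then χ⃗(G) ≤ min{χ⃗(G1) + n2, χ⃗(G2) + n1}. -/

import Mathlib

open SimpleGraph

/-- An orientation of a simple graph `G`: each edge gets exactly one direction.
`dir u v = true` means the edge `uv` is oriented from `u` toward `v` (head `v`). -/
structure Orient {V : Type*} (G : SimpleGraph V) where
  dir : V → V → Bool
  adj_of_dir : ∀ u v, dir u v = true → G.Adj u v
  dir_iff : ∀ u v, G.Adj u v → (dir u v = true ↔ ¬ dir v u = true)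

/-- The indegree of a vertex in an orientation. -/
def Orient.inDeg {V : Type*} [Fintype V] {G : SimpleGraph V} (D : Orient G) (v : V) : ℕ :=
  (Finset.univ.filter (fun u => D.dir u v = true)).card

/-- An orientation is proper if adjacent vertices have distinct indegrees. -/
def Orient.Proper {V : Type*} [Fintype V] {G : SimpleGraph V} (D : Orient G) : Prop :=
  ∀ u v, G.Adj u v → D.inDeg u ≠ D.inDeg v

/-- The proper orientation number: the least `k` such that `G` admits a proper
`k`-orientation (an orientation with all indegrees at most `k`). -/
noncomputable def properOrientNum {V : Type*} [Fintype V] (G : SimpleGraph V) : ℕ :=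
  sInf {k | ∃ D : Orient G, D.Proper ∧ ∀ v, D.inDeg v ≤ k}

-- helper: degree-like counting
open Classical in
noncomputable def mydeg {V : Type*} [Fintype V] (G : SimpleGraph V) (v : V) : ℕ :=
  (Finset.univ.filter (fun u => G.Adj u v)).card

set_option maxHeartbeats 1000000

/-- Every finite graph has a proper orientation with indegrees bounded by degrees. -/
lemma exists_proper_aux : ∀ (n : ℕ) (V : Type u) (_ : Fintype V) (G : SimpleGraph V),
    Fintype.card V = n → ∃ D : Orient G, D.Proper ∧ ∀ v, D.inDeg v ≤ mydeg G v := by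
  intro n
  induction n with
  | zero =>
    intro V _ G hc
    have he : IsEmpty V := Fintype.card_eq_zero_iff.mp hc
    refine ⟨⟨fun _ _ => false, ?_, ?_⟩, ?_, ?_⟩
    · intro u; exact (he.false u).elim
    · intro u; exact (he.false u).elim
    · intro u; exact (he.false u).elim
    · intro u; exact (he.false u).elim
  | succ n ih =>
    intro V _ G hc
    classical
    have hne : (Finset.univ : Finset V).Nonempty := by
      rw [← Finset.card_pos, Finset.card_univ, hc]; omega
    obtain ⟨v, -, hv⟩ := Finset.exists_max_image Finset.univ (mydeg G) hne
    -- the induced graph on V \ {v}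
    set S := {w : V // w ≠ v}
    set G' : SimpleGraph S := SimpleGraph.comap Subtype.val G with hG'
    have hcS : Fintype.card S = n := by
      have := Fintype.card_subtype_compl (fun w : V => w = v)
      simp only [Fintype.card_subtype_eq] at this
      have h2 : Fintype.card S = Fintype.card {w : V // ¬ w = v} := rfl
      rw [h2, this, hc]; omega
    obtain ⟨D', hP', hle'⟩ := ih S inferInstance G' hcS
    set f : V → V → Bool := fun u w =>
      if hu : u = v then false else if hw : w = v then decide (G.Adj u v)
      else D'.dir ⟨u, hu⟩ ⟨w, hw⟩ with hf
    -- indegree at v equals its degree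
    have key1 : (Finset.univ.filter (fun u => f u v = true)).card = mydeg G v := by
      rw [mydeg]
      congr 1
      ext u
      simp only [Finset.mem_filter, Finset.mem_univ, true_and, hf]
      by_cases hu : u = v
      · simp [hu]
      · simp [hu]
    -- indegree elsewhere matches D'
    have key2 : ∀ (w : V) (hw : w ≠ v),
        (Finset.univ.filter (fun u => f u w = true)).card = D'.inDeg ⟨w, hw⟩ := by
      intro w hw
      rw [Orient.inDeg, ← Finset.card_map (Function.Embedding.subtype (· ≠ v))]
      congr 1
      ext u
      simp only [Finset.mem_filter, Finset.mem_univ, true_and, Finset.mem_map,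
        Function.Embedding.coe_subtype]
      constructor
      · intro h
        have hu : u ≠ v := by intro h'; simp [hf, h'] at h
        refine ⟨⟨u, hu⟩, ?_, rfl⟩
        simpa [hf, hu, hw] using h
      · rintro ⟨⟨x, hx⟩, hd, rfl⟩
        simpa [hf, hx, hw] using hd
    -- degrees in G' vs G
    have key3 : ∀ (w : V) (hw : w ≠ v),
        mydeg G' ⟨w, hw⟩ = (Finset.univ.filter (fun u => G.Adj u w ∧ u ≠ v)).card := by
      intro w hw
      rw [mydeg, ← Finset.card_map (Function.Embedding.subtype (· ≠ v))]
      congr 1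
      ext u
      simp only [Finset.mem_filter, Finset.mem_univ, true_and, Finset.mem_map,
        Function.Embedding.coe_subtype]
      constructor
      · rintro ⟨⟨x, hx⟩, ha, rfl⟩
        exact ⟨ha, hx⟩
      · rintro ⟨h1, h2⟩
        exact ⟨⟨u, h2⟩, h1, rfl⟩
    have key4 : ∀ (w : V) (hw : w ≠ v), mydeg G' ⟨w, hw⟩ ≤ mydeg G w := by
      intro w hw
      rw [key3 w hw, mydeg]
      apply Finset.card_le_card
      intro u hu
      simp only [Finset.mem_filter, Finset.mem_univ, true_and] at hu ⊢
      exact hu.1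
    have key5 : ∀ (w : V) (hw : w ≠ v), G.Adj v w → mydeg G' ⟨w, hw⟩ < mydeg G w := by
      intro w hw hadj
      rw [key3 w hw, mydeg]
      apply Finset.card_lt_card
      constructor
      · intro u hu
        simp only [Finset.mem_filter, Finset.mem_univ, true_and] at hu ⊢
        exact hu.1
      · intro hsub
        have hv2 : v ∈ Finset.univ.filter (fun u => G.Adj u w) := by
          simp [hadj]
        have := hsub hv2
        simp at this
    have hao : ∀ u w, f u w = true → G.Adj u w := by
      intro u w h
      by_cases hu : u = v
      · simp [hf, hu] at h
      by_cases hw : w = v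
      · simp [hf, hu, hw] at h; subst hw; exact h
      · simp [hf, hu, hw] at h; exact D'.adj_of_dir ⟨u, hu⟩ ⟨w, hw⟩ h
    have hdi : ∀ u w, G.Adj u w → (f u w = true ↔ ¬ f w u = true) := by
      intro u w hadj
      by_cases hu : u = v
      · have hvw : G.Adj v w := hu ▸ hadj
        have hw : w ≠ v := hvw.ne'
        have hwv : G.Adj w v := hvw.symm
        simp [hf, hu, hw, hwv]
      by_cases hw : w = v
      · have huv : G.Adj u v := hw ▸ hadj
        simp [hf, hu, hw, huv]
      · have := D'.dir_iff ⟨u, hu⟩ ⟨w, hw⟩ hadj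
        simpa [hf, hu, hw] using this
    refine ⟨⟨f, hao, hdi⟩, ?_, ?_⟩
    · intro u w hadj
      by_cases hu : u = v
      · have hvw : G.Adj v w := hu ▸ hadj
        have hw : w ≠ v := hvw.ne'
        have h1 : Orient.inDeg (⟨f, hao, hdi⟩ : Orient G) u = mydeg G v := by
          rw [Orient.inDeg]; rw [hu]; exact key1
        have h2 : Orient.inDeg (⟨f, hao, hdi⟩ : Orient G) w = D'.inDeg ⟨w, hw⟩ := key2 w hw
        rw [h1, h2]
        have : D'.inDeg ⟨w, hw⟩ < mydeg G v :=
          lt_of_lt_of_le (lt_of_le_of_lt (hle' ⟨w, hw⟩) (key5 w hw hvw))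
            (hv w (Finset.mem_univ w))
        omega
      by_cases hw : w = v
      · have huv : G.Adj u v := hw ▸ hadj
        have h1 : Orient.inDeg (⟨f, hao, hdi⟩ : Orient G) w = mydeg G v := by
          rw [Orient.inDeg]; rw [hw]; exact key1
        have h2 : Orient.inDeg (⟨f, hao, hdi⟩ : Orient G) u = D'.inDeg ⟨u, hu⟩ := key2 u hu
        rw [h1, h2]
        have : D'.inDeg ⟨u, hu⟩ < mydeg G v :=
          lt_of_lt_of_le (lt_of_le_of_lt (hle' ⟨u, hu⟩) (key5 u hu huv.symm))
            (hv u (Finset.mem_univ u))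
        omega
      · have h1 : Orient.inDeg (⟨f, hao, hdi⟩ : Orient G) u = D'.inDeg ⟨u, hu⟩ := key2 u hu
        have h2 : Orient.inDeg (⟨f, hao, hdi⟩ : Orient G) w = D'.inDeg ⟨w, hw⟩ := key2 w hw
        rw [h1, h2]
        exact hP' ⟨u, hu⟩ ⟨w, hw⟩ hadj
    · intro w
      by_cases hw : w = v
      · have h1 : Orient.inDeg (⟨f, hao, hdi⟩ : Orient G) w = mydeg G v := by
          rw [Orient.inDeg]; rw [hw]; exact key1
        rw [h1, hw]
      · have h1 : Orient.inDeg (⟨f, hao, hdi⟩ : Orient G) w = D'.inDeg ⟨w, hw⟩ := key2 w hw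
        rw [h1]
        exact le_trans (hle' ⟨w, hw⟩) (key4 w hw)

lemma exists_opt {V : Type*} [Fintype V] (G : SimpleGraph V) :
    ∃ D : Orient G, D.Proper ∧ ∀ v, D.inDeg v ≤ properOrientNum G := by
  classical
  have hne : {k | ∃ D : Orient G, D.Proper ∧ ∀ v, D.inDeg v ≤ k}.Nonempty := by
    obtain ⟨D, hP, hle⟩ := exists_proper_aux (Fintype.card V) V inferInstance G rfl
    refine ⟨Fintype.card V, D, hP, fun v => le_trans (hle v) ?_⟩
    rw [mydeg, ← Finset.card_univ]
    exact Finset.card_filter_le _ _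
  exact Nat.sInf_mem hne

lemma pon_le_of_iso {V W : Type*} [Fintype V] [Fintype W] {G : SimpleGraph V}
    {H : SimpleGraph W} (e : G ≃g H) : properOrientNum H ≤ properOrientNum G := by
  classical
  obtain ⟨D, hP, hle⟩ := exists_opt G
  apply Nat.sInf_le
  set f : W → W → Bool := fun u w => D.dir (e.symm u) (e.symm w) with hf
  have hao : ∀ u w, f u w = true → H.Adj u w := by
    intro u w h
    exact e.symm.map_adj_iff.mp (D.adj_of_dir _ _ h)
  have hdi : ∀ u w, H.Adj u w → (f u w = true ↔ ¬ f w u = true) := by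
    intro u w hadj
    exact D.dir_iff _ _ (e.symm.map_adj_iff.mpr hadj)
  have hdeg : ∀ u, (⟨f, hao, hdi⟩ : Orient H).inDeg u = D.inDeg (e.symm u) := by
    intro u
    simp only [Orient.inDeg]
    apply Finset.card_equiv e.symm.toEquiv
    intro i
    simp [hf]
  refine ⟨⟨f, hao, hdi⟩, ?_, ?_⟩
  · intro u w hadj
    rw [hdeg, hdeg]
    exact hP _ _ (e.symm.map_adj_iff.mpr hadj)
  · intro u
    rw [hdeg]
    exact hle _

/-- The join of two graphs: their disjoint union plus all edges between the two parts. -/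
def graphJoin {V1 V2 : Type*} (G1 : SimpleGraph V1) (G2 : SimpleGraph V2) :
    SimpleGraph (V1 ⊕ V2) where
  Adj x y :=
    match x, y with
    | .inl a, .inl b => G1.Adj a b
    | .inr a, .inr b => G2.Adj a b
    | .inl _, .inr _ => True
    | .inr _, .inl _ => True
  symm := by
    constructor
    rintro (a | a) (b | b) h <;> simp_all <;> exact h.symm
  loopless := by
    constructor
    rintro (a | a) h <;> simp_all

lemma pon_join_le {V1 V2 : Type*} [Fintype V1] [Fintype V2]
    (G1 : SimpleGraph V1) (G2 : SimpleGraph V2) :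
    properOrientNum (graphJoin G1 G2) ≤ properOrientNum G1 + Fintype.card V2 := by
  classical
  obtain ⟨D1, hP1, hle1⟩ := exists_opt G1
  obtain ⟨D2, hP2, -⟩ := exists_opt G2
  apply Nat.sInf_le
  set f : V1 ⊕ V2 → V1 ⊕ V2 → Bool := fun x y =>
    match x, y with
    | .inl a, .inl b => D1.dir a b
    | .inr a, .inr b => D2.dir a b
    | .inr _, .inl _ => true
    | .inl _, .inr _ => false
    with hf
  have hao : ∀ x y, f x y = true → (graphJoin G1 G2).Adj x y := by
    rintro (a | a) (b | b) h
    · exact D1.adj_of_dir a b h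
    · simp [hf] at h
    · trivial
    · exact D2.adj_of_dir a b h
  have hdi : ∀ x y, (graphJoin G1 G2).Adj x y → (f x y = true ↔ ¬ f y x = true) := by
    rintro (a | a) (b | b) hadj
    · exact D1.dir_iff a b hadj
    · simp [hf]
    · simp [hf]
    · exact D2.dir_iff a b hadj
  -- splitting counts over the sum type
  have hsum : ∀ (p : V1 ⊕ V2 → Bool),
      (Finset.univ.filter (fun x => p x = true)).card =
        (Finset.univ.filter (fun a => p (Sum.inl a) = true)).card +
        (Finset.univ.filter (fun b => p (Sum.inr b) = true)).card := by
    intro p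
    rw [← Finset.card_disjSum]
    congr 1
    ext x
    cases x <;> simp
  have hIl : ∀ b, (⟨f, hao, hdi⟩ : Orient (graphJoin G1 G2)).inDeg (Sum.inl b) =
      D1.inDeg b + Fintype.card V2 := by
    intro b
    simp only [Orient.inDeg]
    rw [hsum]
    have h2 : (Finset.univ.filter (fun c : V2 => f (Sum.inr c) (Sum.inl b) = true)).card =
        Fintype.card V2 := by
      rw [← Finset.card_univ]
      congr 1
      ext c
      simp [hf]
    rw [h2]
  have hIr : ∀ c, (⟨f, hao, hdi⟩ : Orient (graphJoin G1 G2)).inDeg (Sum.inr c) =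
      D2.inDeg c := by
    intro c
    simp only [Orient.inDeg]
    rw [hsum]
    have h0 : (Finset.univ.filter (fun a : V1 => f (Sum.inl a) (Sum.inr c) = true)).card = 0 := by
      rw [Finset.card_eq_zero]
      ext a
      simp [hf]
    rw [h0]
    simp only [Nat.zero_add]
    rfl
  have hlt : ∀ c : V2, D2.inDeg c < Fintype.card V2 := by
    intro c
    have hsub : Finset.univ.filter (fun u => D2.dir u c = true) ⊆ Finset.univ.erase c := by
      intro u hu
      simp only [Finset.mem_filter, Finset.mem_univ, true_and] at hu
      exact Finset.mem_erase.mpr ⟨(D2.adj_of_dir u c hu).ne, Finset.mem_univ u⟩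
    calc D2.inDeg c ≤ (Finset.univ.erase c).card := Finset.card_le_card hsub
      _ < Finset.univ.card := Finset.card_erase_lt_of_mem (Finset.mem_univ c)
      _ = Fintype.card V2 := Finset.card_univ
  refine ⟨⟨f, hao, hdi⟩, ?_, ?_⟩
  · rintro (a | a) (b | b) hadj
    · rw [hIl, hIl]
      have := hP1 a b hadj
      omega
    · rw [hIl, hIr]
      have := hlt b
      omega
    · rw [hIr, hIl]
      have := hlt a
      omega
    · rw [hIr, hIr]
      exact hP2 a b hadj
  · rintro (a | a)
    · rw [hIl]
      have := hle1 a
      omega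
    · rw [hIr]
      have := hlt a
      omega

/-- For the join `G = G1 ∧ G2` of two nonempty graphs,
`χ⃗(G) ≤ min (χ⃗(G1) + n2) (χ⃗(G2) + n1)`. -/
theorem properOrientNum_join_le {V1 V2 : Type*} [Fintype V1] [Fintype V2]
    [Nonempty V1] [Nonempty V2] (G1 : SimpleGraph V1) (G2 : SimpleGraph V2) :
    properOrientNum (graphJoin G1 G2) ≤
      min (properOrientNum G1 + Fintype.card V2) (properOrientNum G2 + Fintype.card V1) := by
  refine le_min (pon_join_le G1 G2) ?_
  have e : graphJoin G2 G1 ≃g graphJoin G1 G2 :=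
    ⟨Equiv.sumComm V2 V1, by rintro (a | a) (b | b) <;> exact Iff.rfl⟩
  exact le_trans (pon_le_of_iso e) (pon_join_le G2 G1)
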